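/- Let E : ℝ^N → ℝ be C², strictly convex and coercive, with Hessian eigenvalues uniformly bounded in [ρ_L, ρ_U], 0 < ρ_L ≤ ρ_U. Then the sequence of gradient norms {‖∇E(w^k)‖} produced by Newton's method with exact line search over λ ∈ [0,1] converges to zero, i.e., lim_{k→∞} ‖∇E(w^k)‖ = 0. -/

import Mathlib

open scoped RealInnerProductSpace

-- operator norm bound from symmetry + quadratic form bounds
lemma newton_aux_opnorm {N : ℕ} (A : EuclideanSpace ℝ (Fin N) →L[ℝ] EuclideanSpace ℝ (Fin N))
    (ρU : ℝ) (hρU : 0 ≤ ρU)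
    (hsymm : ∀ x y, ⟪A x, y⟫ = ⟪x, A y⟫)
    (hlo : ∀ v, 0 ≤ ⟪A v, v⟫) (hhi : ∀ v, ⟪A v, v⟫ ≤ ρU * ‖v‖ ^ 2)
    (v : EuclideanSpace ℝ (Fin N)) : ‖A v‖ ≤ ρU * ‖v‖ := by
  rcases eq_or_ne (A v) 0 with h | h
  · simp [h]; positivity
  have hv : v ≠ 0 := by rintro rfl; simp at h
  have hAv : (0:ℝ) < ‖A v‖ := norm_pos_iff.mpr h
  have hvn : (0:ℝ) < ‖v‖ := norm_pos_iff.mpr hv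
  set u := (‖v‖ / ‖A v‖) • A v with hu
  have hun : ‖u‖ = ‖v‖ := by
    rw [hu, norm_smul, Real.norm_eq_abs, abs_of_nonneg (by positivity),
      div_mul_cancel₀ _ hAv.ne']
  have hinner : ⟪A v, u⟫ = ‖v‖ * ‖A v‖ := by
    rw [hu, real_inner_smul_right, real_inner_self_eq_norm_sq]
    field_simp
  have hpolar : 4 * ⟪A v, u⟫ = ⟪A (v + u), v + u⟫ - ⟪A (v - u), v - u⟫ := by
    have h1 : ⟪A u, v⟫ = ⟪A v, u⟫ := by rw [hsymm, real_inner_comm]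
    simp only [map_add, map_sub, inner_add_left, inner_add_right, inner_sub_left,
      inner_sub_right]
    linarith
  have hvu : ⟪v, u⟫ ≤ ‖v‖ * ‖u‖ := real_inner_le_norm v u
  have hnsq : ‖v + u‖ ^ 2 = ‖v‖ ^ 2 + 2 * ⟪v, u⟫ + ‖u‖ ^ 2 := by
    rw [← real_inner_self_eq_norm_sq, ← real_inner_self_eq_norm_sq, ← real_inner_self_eq_norm_sq]
    simp only [inner_add_left, inner_add_right]
    rw [real_inner_comm u v]; ring
  have h1 : 4 * (‖v‖ * ‖A v‖) ≤ ρU * ‖v + u‖ ^ 2 := by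
    rw [← hinner, hpolar]
    have := hlo (v - u)
    have := hhi (v + u)
    linarith
  have h2 : ‖v + u‖ ^ 2 ≤ 4 * ‖v‖ ^ 2 := by rw [hnsq, hun]; nlinarith
  nlinarith [mul_le_mul_of_nonneg_left h2 hρU]

-- descent lemma
lemma newton_aux_descent {N : ℕ} (E : EuclideanSpace ℝ (Fin N) → ℝ)
    (K : EuclideanSpace ℝ (Fin N) → EuclideanSpace ℝ (Fin N) →L[ℝ] EuclideanSpace ℝ (Fin N))
    (ρU : ℝ) (hρU : 0 ≤ ρU)
    (hE : ContDiff ℝ 2 E)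
    (hhess : ∀ w, HasFDerivAt (gradient E) (K w) w)
    (hlo : ∀ w v, 0 ≤ ⟪K w v, v⟫) (hhi : ∀ w v, ⟪K w v, v⟫ ≤ ρU * ‖v‖ ^ 2)
    (x v : EuclideanSpace ℝ (Fin N)) :
    E (x + v) ≤ E x + ⟪gradient E x, v⟫ + ρU / 2 * ‖v‖ ^ 2 := by
  have hdiff : Differentiable ℝ E := hE.differentiable (by norm_num)
  have hgrad : ∀ y, HasGradientAt E (gradient E y) y := fun y =>
    (hdiff y).hasGradientAt
  set c : ℝ → EuclideanSpace ℝ (Fin N) := fun t => x + t • v with hc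
  have hcderiv : ∀ t : ℝ, HasDerivAt c v t := fun t => by
    simpa [hc] using ((hasDerivAt_id t).smul_const v).const_add x
  set ψ : ℝ → ℝ := fun t => ⟪gradient E (c t), v⟫ with hψ
  have hφderiv : ∀ t : ℝ, HasDerivAt (fun t => E (c t)) (ψ t) t := fun t => by
    have := (hgrad (c t)).hasFDerivAt.comp_hasDerivAt t (hcderiv t)
    simpa [hψ, InnerProductSpace.toDual_apply_apply, Function.comp_def] using this
  have hψderiv : ∀ t : ℝ, HasDerivAt ψ ⟪K (c t) v, v⟫ t := fun t => by
    have hg : HasDerivAt (fun t => gradient E (c t)) (K (c t) v) t :=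
      (hhess (c t)).comp_hasDerivAt t (hcderiv t)
    simpa [hψ] using hg.inner ℝ (hasDerivAt_const t v)
  -- bound on ψ increments
  have hψbound : ∀ t : ℝ, 0 ≤ t → ψ t - ψ 0 ≤ ρU * ‖v‖ ^ 2 * t := by
    intro t ht
    have := Convex.norm_image_sub_le_of_norm_hasDerivWithin_le (s := Set.univ)
      (f := ψ) (f' := fun s => ⟪K (c s) v, v⟫)
      (fun s _ => (hψderiv s).hasDerivWithinAt)
      (fun s _ => by
        rw [Real.norm_eq_abs, abs_of_nonneg (hlo _ v)]; exact hhi _ v)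
      convex_univ (Set.mem_univ 0) (Set.mem_univ t)
    have h2 : |ψ t - ψ 0| ≤ ρU * ‖v‖ ^ 2 * t := by
      simpa [Real.norm_eq_abs, abs_of_nonneg ht] using this
    linarith [abs_le.mp h2]
  set h : ℝ → ℝ := fun t => E (c t) - t * ψ 0 - ρU / 2 * t ^ 2 * ‖v‖ ^ 2 with hh
  have hhderiv : ∀ t : ℝ, HasDerivAt h (ψ t - ψ 0 - ρU * t * ‖v‖ ^ 2) t := by
    intro t
    have h1 : HasDerivAt (fun t : ℝ => t * ψ 0) (ψ 0) t := by
      simpa using (hasDerivAt_id t).mul_const (ψ 0)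
    have h2 : HasDerivAt (fun t : ℝ => ρU / 2 * t ^ 2 * ‖v‖ ^ 2)
        (ρU * t * ‖v‖ ^ 2) t := by
      have := ((hasDerivAt_pow 2 t).const_mul (ρU / 2)).mul_const (‖v‖ ^ 2)
      refine this.congr_deriv ?_; ring
    exact ((hφderiv t).sub h1).sub h2
  have hanti : AntitoneOn h (Set.Icc 0 1) := by
    apply antitoneOn_of_deriv_nonpos (convex_Icc 0 1)
    · exact fun t _ => ((hhderiv t).continuousAt).continuousWithinAt
    · exact fun t _ => ((hhderiv t).differentiableAt).differentiableWithinAt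
    · intro t ht
      rw [interior_Icc] at ht
      rw [(hhderiv t).deriv]
      have := hψbound t ht.1.le
      nlinarith
  have h10 : h 1 ≤ h 0 := hanti (Set.mem_Icc.mpr ⟨le_refl 0, zero_le_one⟩)
    (Set.mem_Icc.mpr ⟨zero_le_one, le_refl 1⟩) zero_le_one
  have hc0 : c 0 = x := by simp [hc]
  have hc1 : c 1 = x + v := by simp [hc]
  have hψ0 : ψ 0 = ⟪gradient E x, v⟫ := by simp [hψ, hc0]
  simp only [hh, hc0, hc1, hψ0] at h10
  nlinarith [h10]

/-- Per-step energy decrease of Newton's method with exact line search for a C²,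
strictly convex, coercive energy with Hessian eigenvalues in `[ρL, ρU]`. -/
theorem newton_exact_linesearch_gradient_tendsto_zero {N : ℕ}
    (E : EuclideanSpace ℝ (Fin N) → ℝ)
    (K : EuclideanSpace ℝ (Fin N) → EuclideanSpace ℝ (Fin N) →L[ℝ] EuclideanSpace ℝ (Fin N))
    (ρL ρU : ℝ) (hρL : 0 < ρL) (hρ : ρL ≤ ρU)
    (hE : ContDiff ℝ 2 E)
    (hconv : StrictConvexOn ℝ Set.univ E)
    (hcoer : Filter.Tendsto E (Filter.cocompact _) Filter.atTop)
    (hhess : ∀ w, HasFDerivAt (gradient E) (K w) w)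
    (hsymm : ∀ w x y, ⟪K w x, y⟫ = ⟪x, K w y⟫)
    (heig : ∀ w v, ρL * ‖v‖ ^ 2 ≤ ⟪K w v, v⟫ ∧ ⟪K w v, v⟫ ≤ ρU * ‖v‖ ^ 2)
    (w Δw : ℕ → EuclideanSpace ℝ (Fin N)) (lam : ℕ → ℝ)
    (hnewton : ∀ k, K (w k) (Δw k) = -gradient E (w k))
    (hlam : ∀ k, lam k ∈ Set.Icc (0 : ℝ) 1 ∧
      ∀ μ ∈ Set.Icc (0 : ℝ) 1, E (w k + lam k • Δw k) ≤ E (w k + μ • Δw k))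
    (hupd : ∀ k, w (k + 1) = w k + lam k • Δw k) :
    Filter.Tendsto (fun k => ‖gradient E (w k)‖) Filter.atTop (nhds 0) := by
  have hρU : (0:ℝ) < ρU := lt_of_lt_of_le hρL hρ
  set g : ℕ → EuclideanSpace ℝ (Fin N) := fun k => gradient E (w k) with hg
  set cst : ℝ := ρL ^ 2 / (2 * ρU ^ 3) with hcst
  have hcpos : 0 < cst := by positivity
  -- per-step decrease
  have hkey : ∀ k, E (w (k + 1)) ≤ E (w k) - cst * ‖g k‖ ^ 2 := by
    intro k
    set d := Δw k with hd
    have hμmem : ρL / ρU ∈ Set.Icc (0:ℝ) 1 :=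
      ⟨by positivity, (div_le_one hρU).mpr hρ⟩
    have h1 : E (w (k + 1)) ≤ E (w k + (ρL / ρU) • d) := by
      rw [hupd k]; exact (hlam k).2 _ hμmem
    have h2 : E (w k + (ρL / ρU) • d) ≤
        E (w k) + ⟪g k, (ρL / ρU) • d⟫ + ρU / 2 * ‖(ρL / ρU) • d‖ ^ 2 :=
      newton_aux_descent E K ρU hρU.le hE hhess
        (fun w' v => le_trans (by positivity) (heig w' v).1)
        (fun w' v => (heig w' v).2) (w k) _
    have hgrd : gradient E (w k) = -(K (w k) d) := by rw [hnewton k, neg_neg]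
    have hgd : ⟪g k, d⟫ = -⟪K (w k) d, d⟫ := by
      simp only [hg]; rw [hgrd, inner_neg_left]
    have hlow : ρL * ‖d‖ ^ 2 ≤ ⟪K (w k) d, d⟫ := (heig (w k) d).1
    have hKd : ‖K (w k) d‖ ≤ ρU * ‖d‖ :=
      newton_aux_opnorm (K (w k)) ρU hρU.le (hsymm (w k))
        (fun v => le_trans (by positivity) (heig (w k) v).1)
        (fun v => (heig (w k) v).2) d
    have hgn : ‖g k‖ ≤ ρU * ‖d‖ := by
      simp only [hg]; rw [hgrd, norm_neg]; exact hKd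
    have hsm : ⟪g k, (ρL / ρU) • d⟫ = (ρL / ρU) * ⟪g k, d⟫ := real_inner_smul_right _ _ _
    have hns : ‖(ρL / ρU) • d‖ ^ 2 = (ρL / ρU) ^ 2 * ‖d‖ ^ 2 := by
      rw [norm_smul, Real.norm_eq_abs, mul_pow, sq_abs]
    have hquad : E (w (k+1)) ≤ E (w k) - ρL ^ 2 / (2 * ρU) * ‖d‖ ^ 2 := by
      rw [hsm, hns] at h2
      have hstep : (ρL / ρU) * ⟪g k, d⟫ + ρU / 2 * ((ρL / ρU) ^ 2 * ‖d‖ ^ 2)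
          ≤ -(ρL ^ 2 / (2 * ρU)) * ‖d‖ ^ 2 := by
        rw [hgd]
        have h3 : (ρL / ρU) * -⟪K (w k) d, d⟫ ≤ (ρL / ρU) * -(ρL * ‖d‖ ^ 2) := by
          apply mul_le_mul_of_nonneg_left (by linarith) (by positivity)
        have hfe : (ρL / ρU) * -(ρL * ‖d‖ ^ 2) + ρU / 2 * ((ρL / ρU) ^ 2 * ‖d‖ ^ 2)
            = -(ρL ^ 2 / (2 * ρU)) * ‖d‖ ^ 2 := by field_simp; ring
        linarith
      linarith
    have hd2 : ‖g k‖ ^ 2 ≤ ρU ^ 2 * ‖d‖ ^ 2 := by nlinarith [norm_nonneg (g k), norm_nonneg d]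
    have : cst * ‖g k‖ ^ 2 ≤ ρL ^ 2 / (2 * ρU) * ‖d‖ ^ 2 := by
      have he : ρL ^ 2 / (2 * ρU) * ‖d‖ ^ 2 = cst * (ρU ^ 2 * ‖d‖ ^ 2) := by
        rw [hcst]; field_simp
      rw [he]
      exact mul_le_mul_of_nonneg_left hd2 hcpos.le
    linarith
  -- bounded below
  obtain ⟨x₀, hx₀⟩ := hE.continuous.exists_forall_le hcoer
  -- partial sums bounded
  have hsum : ∀ n, ∑ k ∈ Finset.range n, ‖g k‖ ^ 2 ≤ (E (w 0) - E x₀) / cst := by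
    intro n
    have htel : cst * ∑ k ∈ Finset.range n, ‖g k‖ ^ 2 ≤ E (w 0) - E (w n) := by
      induction n with
      | zero => simp
      | succ n ih =>
        rw [Finset.sum_range_succ, mul_add]
        have := hkey n
        linarith
    rw [le_div_iff₀ hcpos]
    have := hx₀ (w n)
    linarith [htel]
  have hsummable : Summable (fun k => ‖g k‖ ^ 2) :=
    summable_of_sum_range_le (fun k => sq_nonneg _) hsum
  have htend : Filter.Tendsto (fun k => ‖g k‖ ^ 2) Filter.atTop (nhds 0) :=
    hsummable.tendsto_atTop_zero
  have h2 : Filter.Tendsto (fun k => Real.sqrt (‖g k‖ ^ 2)) Filter.atTop (nhds 0) := by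
    have := (Real.continuous_sqrt.tendsto 0).comp htend
    simpa [Function.comp_def] using this
  have hfun : (fun k => ‖g k‖) = fun k => Real.sqrt (‖g k‖ ^ 2) := by
    funext k; rw [Real.sqrt_sq (norm_nonneg _)]
  rw [show (fun k => ‖gradient E (w k)‖) = fun k => ‖g k‖ from rfl, hfun]
  exact h2
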